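/- Let q ≥ 2 be an integer and let f be a probability density function on (0,1) with ‖f‖_∞ = sup_{(0,1)} |f| < ∞ which is continuous on (0,1) except at finitely many points. Then sup_{x ∈ (0,1)} |f_n(x) − 1| → 0 as n → ∞, i.e. the densities f_n of T^n(X) converge uniformly to 1. -/

import Mathlib

open MeasureTheory Set Filter

/-- `f_n(x) = q^{−n} Σ_{j=0}^{q^n−1} f(q^{−n}(j+x))`, the density of `T^n(X)`
when `X` has density `f`. -/
noncomputable def gIter (q : ℕ) (f : ℝ → ℝ) (n : ℕ) (x : ℝ) : ℝ :=
  (q : ℝ) ^ (-(n : ℤ)) * ∑ j ∈ Finset.range (q ^ n), f (((j : ℝ) + x) / (q : ℝ) ^ n)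

theorem stmt15
    (q : ℕ) (hq : 2 ≤ q)
    (f : ℝ → ℝ) (hf_meas : Measurable f) (hf_nonneg : ∀ x, 0 ≤ f x)
    (hf_supp : ∀ x, x ∉ Set.Ioo (0:ℝ) 1 → f x = 0)
    (hf_pdf : ∫ t in Set.Ioo (0:ℝ) 1, f t = 1)
    -- `‖f‖_∞ < ∞`
    (hbdd : BddAbove ((fun x => |f x|) '' Set.Ioo (0:ℝ) 1))
    -- `f` is continuous on `(0,1)` except at finitely many points
    (hcont : ∃ S : Finset ℝ, ∀ x ∈ Set.Ioo (0:ℝ) 1, x ∉ S → ContinuousAt f x) :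
    TendstoUniformlyOn (fun n x => gIter q f n x) (fun _ => 1) atTop
      (Set.Ioo (0:ℝ) 1) := by
  classical
  obtain ⟨S, hS⟩ := hcont
  obtain ⟨M₀, hM₀⟩ := hbdd
  set M : ℝ := max M₀ 1 with hMdef
  have hM1 : (1:ℝ) ≤ M := le_max_right _ _
  have hM0 : (0:ℝ) < M := lt_of_lt_of_le one_pos hM1
  have hfM : ∀ y : ℝ, |f y| ≤ M := by
    intro y
    by_cases hy : y ∈ Set.Ioo (0:ℝ) 1
    · exact le_trans (hM₀ ⟨y, hy, rfl⟩) (le_max_left _ _)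
    · rw [hf_supp y hy]; simpa using hM0.le
  have hq1 : (1:ℝ) < (q:ℝ) := by exact_mod_cast lt_of_lt_of_le one_lt_two hq
  have hq0 : (0:ℝ) < (q:ℝ) := lt_trans one_pos hq1
  set S' : Finset ℝ := insert 0 (insert 1 S) with hS'def
  set m : ℕ := S'.card with hmdef
  -- integrability of f on [0,1]
  have hintIcc : IntegrableOn f (Set.Icc (0:ℝ) 1) volume := by
    apply Measure.integrableOn_of_bounded (M := M)
    · exact (isCompact_Icc.measure_lt_top).ne
    · exact hf_meas.aestronglyMeasurable
    · exact Filter.Eventually.of_forall (fun y => by simpa using hfM y)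
  rw [Metric.tendstoUniformlyOn_iff]
  intro ε hε
  set ε₁ : ℝ := ε / 4 with hε₁def
  have hε₁ : 0 < ε₁ := by positivity
  set δ : ℝ := ε₁ / (16 * M * ((m:ℝ) + 1)) with hδdef
  have hδ0 : 0 < δ := by positivity
  -- the compact set K
  set K : Set ℝ := Set.Icc (0:ℝ) 1 ∩ ⋂ s ∈ (S' : Finset ℝ), {y : ℝ | δ ≤ |y - s|} with hKdef
  have hKcompact : IsCompact K := by
    apply isCompact_Icc.inter_right
    apply isClosed_biInter
    intro s _
    have : IsClosed {y : ℝ | δ ≤ |y - s|} :=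
      isClosed_le continuous_const ((continuous_id.sub continuous_const).abs)
    exact this
  have hKmem : ∀ y : ℝ, y ∈ K ↔ (y ∈ Set.Icc (0:ℝ) 1 ∧ ∀ s ∈ S', δ ≤ |y - s|) := by
    intro y
    simp [hKdef, Set.mem_iInter]
  have hKIoo : ∀ y ∈ K, y ∈ Set.Ioo (0:ℝ) 1 ∧ y ∉ S := by
    intro y hy
    rw [hKmem] at hy
    obtain ⟨⟨hy0, hy1⟩, hfar⟩ := hy
    have h0 : δ ≤ |y - 0| := hfar 0 (by simp [hS'def])
    have h1 : δ ≤ |y - 1| := hfar 1 (by simp [hS'def])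
    rw [sub_zero, abs_of_nonneg hy0] at h0
    rw [abs_of_nonpos (by linarith)] at h1
    refine ⟨⟨by linarith, by linarith⟩, ?_⟩
    intro hyS
    have := hfar y (by simp [hS'def, hyS])
    simp at this
    linarith
  have hKcont : ContinuousOn f K := by
    intro y hy
    obtain ⟨hy1, hy2⟩ := hKIoo y hy
    exact (hS y hy1 hy2).continuousWithinAt
  obtain ⟨η, hη0, hη⟩ := Metric.uniformContinuousOn_iff.mp
    (hKcompact.uniformContinuousOn_of_continuous hKcont) ε₁ hε₁
  -- choose n large
  have hlim : Tendsto (fun n : ℕ => ((q:ℝ) ^ n)⁻¹) atTop (nhds 0) := by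
    have : Tendsto (fun n : ℕ => ((q:ℝ)⁻¹) ^ n) atTop (nhds 0) :=
      tendsto_pow_atTop_nhds_zero_of_lt_one (by positivity) (inv_lt_one_of_one_lt₀ hq1)
    simpa [inv_pow] using this
  have hmin0 : (0:ℝ) < min η δ := lt_min hη0 hδ0
  filter_upwards [hlim.eventually (eventually_lt_nhds hmin0)] with n hn
  intro x hx
  set Q : ℝ := (q:ℝ) ^ n with hQdef
  have hQ0 : (0:ℝ) < Q := pow_pos hq0 n
  have hQinv : Q⁻¹ < min η δ := hn
  have hQη : Q⁻¹ < η := lt_of_lt_of_le hQinv (min_le_left _ _)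
  have hQδ : Q⁻¹ ≤ δ := le_of_lt (lt_of_lt_of_le hQinv (min_le_right _ _))
  set a : ℕ → ℝ := fun k => (k:ℝ) / Q with hadef
  have hlen : ∀ j : ℕ, a (j + 1) - a j = Q⁻¹ := by
    intro j
    simp only [hadef]
    push_cast
    field_simp
    ring
  have hamono : ∀ j : ℕ, a j ≤ a (j + 1) := by
    intro j
    have := hlen j
    have : (0:ℝ) < Q⁻¹ := by positivity
    linarith [hlen j]
  have hsub : ∀ j : ℕ, j < q ^ n → Set.Icc (a j) (a (j + 1)) ⊆ Set.Icc (0:ℝ) 1 := by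
    intro j hj
    apply Set.Icc_subset_Icc
    · simp only [hadef]; positivity
    · simp only [hadef]
      rw [div_le_one hQ0]
      have : (j:ℝ) + 1 ≤ (q:ℝ) ^ n := by
        have : (j + 1 : ℕ) ≤ q ^ n := hj
        exact_mod_cast this
      push_cast
      simpa [hQdef] using this
  have hII : ∀ j : ℕ, j < q ^ n → IntervalIntegrable f volume (a j) (a (j + 1)) := by
    intro j hj
    rw [intervalIntegrable_iff]
    apply hintIcc.mono_set
    rw [Set.uIoc_of_le (hamono j)]
    exact subset_trans Set.Ioc_subset_Icc_self (hsub j hj)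
  -- the sum of integrals is 1
  have hsplit : ∑ j ∈ Finset.range (q ^ n), ∫ t in a j..a (j + 1), f t = 1 := by
    rw [intervalIntegral.sum_integral_adjacent_intervals (fun k hk => hII k hk)]
    have ha0 : a 0 = 0 := by simp [hadef]
    have haN : a (q ^ n) = 1 := by
      simp only [hadef, hQdef]
      rw [div_eq_one_iff_eq (ne_of_gt hQ0)]
      push_cast
      rfl
    rw [ha0, haN, intervalIntegral.integral_of_le zero_le_one,
      integral_Ioc_eq_integral_Ioo]
    exact hf_pdf
  -- sample points
  set sp : ℕ → ℝ := fun j => ((j:ℝ) + x) / Q with hspdef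
  have hspmem : ∀ j : ℕ, sp j ∈ Set.Icc (a j) (a (j + 1)) := by
    intro j
    obtain ⟨hx0, hx1⟩ := hx
    constructor
    · simp only [hspdef, hadef]
      gcongr
      linarith
    · simp only [hspdef, hadef]
      gcongr
      push_cast
      linarith
  -- key identity
  have key : gIter q f n x - 1
      = ∑ j ∈ Finset.range (q ^ n), ∫ t in a j..a (j + 1), (f (sp j) - f t) := by
    have h1 : ∀ j ∈ Finset.range (q ^ n),
        ∫ t in a j..a (j + 1), (f (sp j) - f t)
          = Q⁻¹ * f (sp j) - ∫ t in a j..a (j + 1), f t := by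
      intro j hj
      rw [intervalIntegral.integral_sub intervalIntegrable_const
        (hII j (Finset.mem_range.mp hj)), intervalIntegral.integral_const]
      rw [hlen j]
      simp [smul_eq_mul]
    rw [Finset.sum_congr rfl h1, Finset.sum_sub_distrib, hsplit]
    unfold gIter
    rw [← Finset.mul_sum]
    have : (q:ℝ) ^ (-(n:ℤ)) = Q⁻¹ := by
      rw [zpow_neg, zpow_natCast]
    rw [this]
  -- bounds on each term
  set B : ℕ → ℝ := fun j => ‖∫ t in a j..a (j + 1), (f (sp j) - f t)‖ with hBdef
  have hBall : ∀ j : ℕ, B j ≤ 2 * M * Q⁻¹ := by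
    intro j
    have := intervalIntegral.norm_integral_le_of_norm_le_const
      (a := a j) (b := a (j+1)) (C := 2 * M) (f := fun t => f (sp j) - f t) ?_
    · calc B j ≤ 2 * M * |a (j+1) - a j| := this
        _ = 2 * M * Q⁻¹ := by rw [hlen j, abs_of_pos (by positivity)]
    · intro t _
      rw [Real.norm_eq_abs]
      calc |f (sp j) - f t| ≤ |f (sp j)| + |f t| := abs_sub _ _
        _ ≤ M + M := add_le_add (hfM _) (hfM _)
        _ = 2 * M := by ring
  set good : ℕ → Prop :=
    fun j => ∀ s ∈ S', ∀ y ∈ Set.Icc (a j) (a (j + 1)), δ ≤ |y - s| with hgooddef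
  have hgoodK : ∀ j : ℕ, j < q ^ n → good j →
      Set.Icc (a j) (a (j + 1)) ⊆ K := by
    intro j hj hgj y hy
    rw [hKmem]
    exact ⟨hsub j hj hy, fun s hs => hgj s hs y hy⟩
  have hBgood : ∀ j : ℕ, j < q ^ n → good j → B j ≤ ε₁ * Q⁻¹ := by
    intro j hj hgj
    have hKsub := hgoodK j hj hgj
    have := intervalIntegral.norm_integral_le_of_norm_le_const
      (a := a j) (b := a (j+1)) (C := ε₁) (f := fun t => f (sp j) - f t) ?_
    · calc B j ≤ ε₁ * |a (j+1) - a j| := this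
        _ = ε₁ * Q⁻¹ := by rw [hlen j, abs_of_pos (by positivity)]
    · intro t ht
      rw [Set.uIoc_of_le (hamono j)] at ht
      have htIcc : t ∈ Set.Icc (a j) (a (j + 1)) := Set.Ioc_subset_Icc_self ht
      have htK : t ∈ K := hKsub htIcc
      have hsK : sp j ∈ K := hKsub (hspmem j)
      have hdist : dist (sp j) t < η := by
        rw [Real.dist_eq]
        have h1 := (hspmem j).1
        have h2 := (hspmem j).2
        have h3 := htIcc.1
        have h4 := htIcc.2
        have h5 := hlen j
        exact lt_of_le_of_lt (abs_le.mpr ⟨by linarith, by linarith⟩) hQη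
      have := hη (sp j) hsK t htK hdist
      rw [Real.dist_eq] at this
      rw [Real.norm_eq_abs]
      exact this.le
  -- counting bad intervals
  set bad : Finset ℕ := (Finset.range (q ^ n)).filter (fun j => ¬ good j) with hbaddef
  set bads : ℝ → Finset ℕ :=
    fun s => (Finset.range (q ^ n)).filter (fun j => |a j - s| ≤ 2 * δ) with hbadsdef
  have hbadsub : bad ⊆ S'.biUnion bads := by
    intro j hj
    rw [hbaddef, Finset.mem_filter] at hj
    obtain ⟨hjr, hjb⟩ := hj
    simp only [hgooddef] at hjb
    push_neg at hjb
    obtain ⟨s, hs, y, hy, hys⟩ := hjb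
    rw [Finset.mem_biUnion]
    refine ⟨s, hs, ?_⟩
    rw [hbadsdef, Finset.mem_filter]
    refine ⟨hjr, ?_⟩
    have h1 : |a j - y| ≤ Q⁻¹ := by
      have h2 := hy.1
      have h3 := hy.2
      have h4 := hlen j
      rw [abs_le]
      constructor <;> linarith
    calc |a j - s| ≤ |a j - y| + |y - s| := abs_sub_le _ _ _
      _ ≤ Q⁻¹ + δ := add_le_add h1 hys.le
      _ ≤ 2 * δ := by linarith
  have hbadscard : ∀ s : ℝ, ((bads s).card : ℝ) ≤ 5 * δ * Q := by
    intro s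
    rcases (bads s).eq_empty_or_nonempty with he | ⟨j₀, hj₀⟩
    · rw [he]
      simp
      exact mul_nonneg (mul_nonneg (by norm_num) hδ0.le) hQ0.le
    · have hmem : ∀ j ∈ bads s, (Q * (s - 2 * δ) ≤ (j:ℝ)) ∧ ((j:ℝ) ≤ Q * (s + 2 * δ)) := by
        intro j hj
        rw [hbadsdef, Finset.mem_filter] at hj
        obtain ⟨-, hj2⟩ := hj
        rw [abs_le] at hj2
        have haj : a j = (j:ℝ) / Q := rfl
        rw [haj] at hj2
        constructor
        · have h1 : s - 2 * δ ≤ (j:ℝ) / Q := by linarith [hj2.1]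
          have h2 := (le_div_iff₀ hQ0).mp h1
          linarith
        · have h1 : (j:ℝ) / Q ≤ s + 2 * δ := by linarith [hj2.2]
          have h2 := (div_le_iff₀ hQ0).mp h1
          linarith
      have hmem' : ∀ j ∈ bads s, j ∈ Finset.Icc ⌈Q * (s - 2 * δ)⌉₊ ⌊Q * (s + 2 * δ)⌋₊ := by
        intro j hj
        obtain ⟨h1, h2⟩ := hmem j hj
        rw [Finset.mem_Icc]
        exact ⟨Nat.ceil_le.mpr h1, Nat.le_floor h2⟩
      have hb0 : (0:ℝ) ≤ Q * (s + 2 * δ) := le_trans (Nat.cast_nonneg j₀) (hmem j₀ hj₀).2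
      have hcardle : (bads s).card ≤ (Finset.Icc ⌈Q * (s - 2 * δ)⌉₊ ⌊Q * (s + 2 * δ)⌋₊).card :=
        Finset.card_le_card hmem'
      have hle : ⌈Q * (s - 2 * δ)⌉₊ ≤ ⌊Q * (s + 2 * δ)⌋₊ + 1 := by
        have := hmem' j₀ hj₀
        rw [Finset.mem_Icc] at this
        omega
      have hIccval : ((Finset.Icc ⌈Q * (s - 2 * δ)⌉₊ ⌊Q * (s + 2 * δ)⌋₊).card : ℝ)
          ≤ Q * (s + 2 * δ) + 1 - Q * (s - 2 * δ) := by
        rw [Nat.card_Icc, Nat.cast_sub hle]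
        push_cast
        have hf1 : (⌊Q * (s + 2 * δ)⌋₊ : ℝ) ≤ Q * (s + 2 * δ) := Nat.floor_le hb0
        have hf2 : Q * (s - 2 * δ) ≤ (⌈Q * (s - 2 * δ)⌉₊ : ℝ) := Nat.le_ceil _
        linarith
      have hδQ : (1:ℝ) ≤ δ * Q := by
        have : Q⁻¹ * Q ≤ δ * Q := mul_le_mul_of_nonneg_right hQδ hQ0.le
        rwa [inv_mul_cancel₀ hQ0.ne'] at this
      calc ((bads s).card : ℝ) ≤ ((Finset.Icc ⌈Q * (s - 2 * δ)⌉₊ ⌊Q * (s + 2 * δ)⌋₊).card : ℝ) := by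
            exact_mod_cast hcardle
        _ ≤ Q * (s + 2 * δ) + 1 - Q * (s - 2 * δ) := hIccval
        _ = 4 * δ * Q + 1 := by ring
        _ ≤ 5 * δ * Q := by linarith
  have hbadcard : ((bad).card : ℝ) ≤ (m:ℝ) * (5 * δ * Q) := by
    have h1 : bad.card ≤ ∑ s ∈ S', (bads s).card :=
      le_trans (Finset.card_le_card hbadsub) (Finset.card_biUnion_le)
    calc ((bad).card : ℝ) ≤ ((∑ s ∈ S', (bads s).card : ℕ) : ℝ) := by exact_mod_cast h1
      _ = ∑ s ∈ S', ((bads s).card : ℝ) := by push_cast; ring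
      _ ≤ ∑ _s ∈ S', (5 * δ * Q) := Finset.sum_le_sum (fun s _ => hbadscard s)
      _ = (m:ℝ) * (5 * δ * Q) := by
          rw [Finset.sum_const, nsmul_eq_mul, hmdef]
  -- put everything together
  have htotal : |gIter q f n x - 1| ≤ 2 * ε₁ := by
    rw [key]
    calc |∑ j ∈ Finset.range (q ^ n), ∫ t in a j..a (j + 1), (f (sp j) - f t)|
        ≤ ∑ j ∈ Finset.range (q ^ n), B j := by
          simpa [hBdef, Real.norm_eq_abs] using
            Finset.abs_sum_le_sum_abs
              (fun j => ∫ t in a j..a (j + 1), (f (sp j) - f t)) (Finset.range (q ^ n))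
      _ = ∑ j ∈ (Finset.range (q ^ n)).filter (fun j => good j), B j
            + ∑ j ∈ bad, B j := (Finset.sum_filter_add_sum_filter_not _ _ _).symm
      _ ≤ ∑ j ∈ (Finset.range (q ^ n)).filter (fun j => good j), ε₁ * Q⁻¹
            + ∑ j ∈ bad, 2 * M * Q⁻¹ := by
          apply add_le_add
          · apply Finset.sum_le_sum
            intro j hj
            rw [Finset.mem_filter] at hj
            exact hBgood j (Finset.mem_range.mp hj.1) hj.2
          · exact Finset.sum_le_sum (fun j _ => hBall j)
      _ = ((Finset.range (q ^ n)).filter (fun j => good j)).card * (ε₁ * Q⁻¹)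
            + (bad.card : ℝ) * (2 * M * Q⁻¹) := by
          rw [Finset.sum_const, Finset.sum_const, nsmul_eq_mul, nsmul_eq_mul]
      _ ≤ (q ^ n : ℝ) * (ε₁ * Q⁻¹) + ((m:ℝ) * (5 * δ * Q)) * (2 * M * Q⁻¹) := by
          apply add_le_add
          · apply mul_le_mul_of_nonneg_right ?_ (mul_nonneg hε₁.le (inv_nonneg.mpr hQ0.le))
            have : ((Finset.range (q ^ n)).filter (fun j => good j)).card ≤ q ^ n := by
              calc _ ≤ (Finset.range (q ^ n)).card := Finset.card_filter_le _ _
                _ = q ^ n := Finset.card_range _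
            exact_mod_cast this
          · exact mul_le_mul_of_nonneg_right hbadcard
              (mul_nonneg (by linarith [hM0] : (0:ℝ) ≤ 2 * M) (inv_nonneg.mpr hQ0.le))
      _ ≤ ε₁ + ε₁ := by
          apply add_le_add
          · have hQeq : (q ^ n : ℝ) = Q := by rw [hQdef]
            rw [hQeq, show Q * (ε₁ * Q⁻¹) = ε₁ * (Q * Q⁻¹) by ring,
              mul_inv_cancel₀ hQ0.ne', mul_one]
          · have h1 : ((m:ℝ) * (5 * δ * Q)) * (2 * M * Q⁻¹) = 10 * M * (m:ℝ) * δ * (Q * Q⁻¹) := by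
              ring
            rw [h1, mul_inv_cancel₀ hQ0.ne', mul_one]
            have hm0 : (0:ℝ) ≤ (m:ℝ) := Nat.cast_nonneg m
            have hA0 : (0:ℝ) < 16 * M * ((m:ℝ) + 1) :=
              mul_pos (mul_pos (by norm_num) hM0) (by linarith)
            have hδeq : 16 * M * ((m:ℝ) + 1) * δ = ε₁ := by
              rw [hδdef, ← mul_div_assoc]
              exact mul_div_cancel_left₀ ε₁ hA0.ne'
            have hh1 : (0:ℝ) ≤ M * δ * (m:ℝ) :=
              mul_nonneg (mul_nonneg hM0.le hδ0.le) hm0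
            have hh2 : (0:ℝ) ≤ M * δ := mul_nonneg hM0.le hδ0.le
            linarith [hδeq, hh1, hh2]
      _ = 2 * ε₁ := by ring
  rw [Real.dist_eq, abs_sub_comm]
  calc |gIter q f n x - 1| ≤ 2 * ε₁ := htotal
    _ < ε := by rw [hε₁def]; linarith
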